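/- arXiv:2112.15347 — 5 statements merged into one kernel-verified Lean document; each statement's English description precedes it below -/
import Mathlib

section
/- Let β > 0, γ ≥ 0, let λ be a nonzero real number, and let x₀ ∈ ℝ satisfy 1 + γλe^{x₀} > 0 and β + λe^{x₀} > 0. Then for every w = x + iy ∈ ℂ with x ≤ x₀ and |y| < π/2: the complex numbers 1 + γλe^{w} and β + λe^{w} both have positive real part, and, with ln denoting the principal branch of the complex logarithm, Re ln((1+γλe^{w})/(β+λe^{w})) = (1/2)·ln((1 + γ²λ²e^{2x} + 2γλe^{x}cos y)/(β² + λ²e^{2x} + 2βλe^{x}cos y)) and |Im ln((1+γλe^{w})/(β+λe^{w}))| = arctan(|(βγ−1)λe^{x}sin y| / (β + γλ²e^{2x} + (βγ+1)λe^{x}cos y)). -/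
open Real Complex

lemma aux_pos (a k x x₀ c : ℝ) (ha : 0 < a) (h : 0 < a + k * Real.exp x₀)
    (hx : x ≤ x₀) (hc : 0 < c) (hc1 : c ≤ 1) : 0 < a + k * Real.exp x * c := by
  rcases le_or_gt 0 k with hk | hk
  · nlinarith [mul_nonneg (mul_nonneg hk (Real.exp_pos x).le) hc.le]
  · have h1 : Real.exp x ≤ Real.exp x₀ := Real.exp_le_exp.2 hx
    have t1 : k * Real.exp x₀ ≤ k * Real.exp x := mul_le_mul_of_nonpos_left h1 hk.le
    have t2 : 0 ≤ (1 - c) * (-k * Real.exp x) :=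
      mul_nonneg (by linarith) (mul_nonneg (by linarith) (Real.exp_pos x).le)
    nlinarith

lemma abs_arctan (t : ℝ) : |Real.arctan t| = Real.arctan |t| := by
  rcases le_or_gt 0 t with ht | ht
  · rw [_root_.abs_of_nonneg ht, _root_.abs_of_nonneg
      (by simpa using Real.arctan_strictMono.monotone ht)]
  · have h1 : Real.arctan t < 0 := by simpa using Real.arctan_strictMono ht
    rw [_root_.abs_of_neg ht, _root_.abs_of_neg h1, ← Real.arctan_neg]

/-- Closed form of the real and imaginary parts of `ln((1+γλe^w)/(β+λe^w))` for
`w = x + iy` with `x ≤ x₀` and `|y| < π/2`, where `1 + γλe^{x₀} > 0` and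
`β + λe^{x₀} > 0`. -/
theorem re_im_log_ratio
    (β γ lam : ℝ) (hβ : 0 < β) (hγ : 0 ≤ γ) (hlam : lam ≠ 0)
    (x₀ : ℝ) (h₁ : 0 < 1 + γ * lam * Real.exp x₀) (h₂ : 0 < β + lam * Real.exp x₀)
    (x y : ℝ) (hx : x ≤ x₀) (hy : |y| < Real.pi / 2) :
    0 < (1 + (γ : ℂ) * (lam : ℂ) * Complex.exp ((x : ℂ) + (y : ℂ) * Complex.I)).re ∧
    0 < ((β : ℂ) + (lam : ℂ) * Complex.exp ((x : ℂ) + (y : ℂ) * Complex.I)).re ∧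
    (Complex.log ((1 + (γ : ℂ) * (lam : ℂ) * Complex.exp ((x : ℂ) + (y : ℂ) * Complex.I)) /
        ((β : ℂ) + (lam : ℂ) * Complex.exp ((x : ℂ) + (y : ℂ) * Complex.I)))).re =
      (1 / 2) * Real.log
        ((1 + γ ^ 2 * lam ^ 2 * Real.exp (2 * x) + 2 * γ * lam * Real.exp x * Real.cos y) /
         (β ^ 2 + lam ^ 2 * Real.exp (2 * x) + 2 * β * lam * Real.exp x * Real.cos y)) ∧
    |(Complex.log ((1 + (γ : ℂ) * (lam : ℂ) * Complex.exp ((x : ℂ) + (y : ℂ) * Complex.I)) /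
        ((β : ℂ) + (lam : ℂ) * Complex.exp ((x : ℂ) + (y : ℂ) * Complex.I)))).im| =
      Real.arctan (|(β * γ - 1) * lam * Real.exp x * Real.sin y| /
        (β + γ * lam ^ 2 * Real.exp (2 * x) + (β * γ + 1) * lam * Real.exp x * Real.cos y)) := by
  set w : ℂ := (x : ℂ) + (y : ℂ) * Complex.I with hw
  set A : ℂ := 1 + (γ : ℂ) * (lam : ℂ) * Complex.exp w with hA
  set B : ℂ := (β : ℂ) + (lam : ℂ) * Complex.exp w with hB
  have hwre : w.re = x := by simp [hw]
  have hwim : w.im = y := by simp [hw]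
  have hc : 0 < Real.cos y := Real.cos_pos_of_mem_Ioo (abs_lt.1 hy |> fun h => ⟨h.1, h.2⟩)
  have hc1 : Real.cos y ≤ 1 := Real.cos_le_one y
  have hEre : (Complex.exp w).re = Real.exp x * Real.cos y := by
    rw [Complex.exp_re, hwre, hwim]
  have hEim : (Complex.exp w).im = Real.exp x * Real.sin y := by
    rw [Complex.exp_im, hwre, hwim]
  have hAre : A.re = 1 + γ * lam * (Real.exp x * Real.cos y) := by
    simp [hA, hEre, hEim]
  have hAim : A.im = γ * lam * (Real.exp x * Real.sin y) := by
    simp [hA, hEre, hEim]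
  have hBre : B.re = β + lam * (Real.exp x * Real.cos y) := by
    simp [hB, hEre, hEim]
  have hBim : B.im = lam * (Real.exp x * Real.sin y) := by
    simp [hB, hEre, hEim]
  have hApos : 0 < A.re := by
    rw [hAre]
    have := aux_pos 1 (γ * lam) x x₀ (Real.cos y) one_pos (by linarith) hx hc hc1
    linarith [this]
  have hBpos : 0 < B.re := by
    rw [hBre]
    have := aux_pos β lam x x₀ (Real.cos y) hβ (by linarith) hx hc hc1
    linarith [this]
  have hAne : A ≠ 0 := fun h => by simp [h] at hApos
  have hBne : B ≠ 0 := fun h => by simp [h] at hBpos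
  have hsc : Real.sin y ^ 2 + Real.cos y ^ 2 = 1 := Real.sin_sq_add_cos_sq y
  have hexp2 : Real.exp (2 * x) = Real.exp x * Real.exp x := by
    rw [two_mul, Real.exp_add]
  have hnsA : Complex.normSq A =
      1 + γ ^ 2 * lam ^ 2 * Real.exp (2 * x) + 2 * γ * lam * Real.exp x * Real.cos y := by
    rw [Complex.normSq_apply, hAre, hAim, hexp2]
    linear_combination γ ^ 2 * lam ^ 2 * (Real.exp x * Real.exp x) * hsc
  have hnsB : Complex.normSq B =
      β ^ 2 + lam ^ 2 * Real.exp (2 * x) + 2 * β * lam * Real.exp x * Real.cos y := by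
    rw [Complex.normSq_apply, hBre, hBim, hexp2]
    linear_combination lam ^ 2 * (Real.exp x * Real.exp x) * hsc
  have hnsApos : 0 < Complex.normSq A := Complex.normSq_pos.2 hAne
  have hnsBpos : 0 < Complex.normSq B := Complex.normSq_pos.2 hBne
  -- numerator and denominator of the quotient
  set D : ℝ := β + γ * lam ^ 2 * Real.exp (2 * x) + (β * γ + 1) * lam * Real.exp x * Real.cos y
    with hD
  set N : ℝ := (β * γ - 1) * lam * Real.exp x * Real.sin y with hN
  have hDeq : A.re * B.re + A.im * B.im = D := by
    rw [hAre, hAim, hBre, hBim, hD, hexp2]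
    linear_combination γ * lam ^ 2 * (Real.exp x * Real.exp x) * hsc
  have hNeq : A.im * B.re - A.re * B.im = N := by
    rw [hAre, hAim, hBre, hBim, hN]; ring
  have hDpos : 0 < D := by
    rw [← hDeq]
    have him : 0 ≤ A.im * B.im := by
      rw [hAim, hBim]; nlinarith [sq_nonneg (lam * (Real.exp x * Real.sin y)), hγ]
    exact add_pos_of_pos_of_nonneg (mul_pos hApos hBpos) him
  have hQre : (A / B).re = D / Complex.normSq B := by
    rw [Complex.div_re, hDeq.symm]; ring
  have hQim : (A / B).im = N / Complex.normSq B := by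
    rw [Complex.div_im, hNeq.symm]; ring
  have hQrepos : 0 < (A / B).re := by
    rw [hQre]; exact div_pos hDpos hnsBpos
  refine ⟨hApos, hBpos, ?_, ?_⟩
  · rw [Complex.log_re, norm_div, Real.log_div (norm_ne_zero_iff.2 hAne) (norm_ne_zero_iff.2 hBne),
      Complex.norm_def, Complex.norm_def, Real.log_sqrt (Complex.normSq_nonneg _),
      Real.log_sqrt (Complex.normSq_nonneg _), hnsA, hnsB,
      Real.log_div (by rw [← hnsA]; positivity) (by rw [← hnsB]; positivity)]
    ring
  · have hQne : A / B ≠ 0 := div_ne_zero hAne hBne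
    have harg : Complex.arg (A / B) = Real.arctan ((A / B).im / (A / B).re) := by
      have h1 : |Complex.arg (A / B)| < Real.pi / 2 :=
        Complex.abs_arg_lt_pi_div_two_iff.2 (Or.inl hQrepos)
      rw [← Complex.tan_arg, Real.arctan_tan (by linarith [abs_lt.1 h1 |>.1])
        (abs_lt.1 h1 |>.2)]
    have hqq : N / Complex.normSq B / (D / Complex.normSq B) = N / D := by
      rw [div_div_div_comm, div_self hnsBpos.ne', div_one]
    rw [Complex.log_im, harg, hQre, hQim, hqq, abs_arctan, abs_div,
      _root_.abs_of_pos hDpos]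
end

section
/- Let β > 0 and γ ≥ 0 with βγ < 1, and set d̄ := (1+√(βγ))/(1−√(βγ)). If β ≤ 1, then the function d ↦ λ_c(d) is strictly decreasing on (d̄, +∞). If β > 1, then there exists d_c > d̄ such that d ↦ λ_c(d) is strictly decreasing on (d̄, d_c) and strictly increasing on (d_c, +∞). -/
/-- `x̂_d` for two-spin parameters `β, γ`. -/
noncomputable def xhat (β γ d : ℝ) : ℝ :=
  if γ = 0 then β / (d - 1)
  else (-1 - β * γ + d * (1 - β * γ) -
    Real.sqrt ((-1 - β * γ + d * (1 - β * γ)) ^ 2 - 4 * (β * γ))) / (2 * γ)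

/-- The critical activity `λ_c(d) = x̂_d ((x̂_d + β)/(γ x̂_d + 1))^d`. -/
noncomputable def lamC (β γ d : ℝ) : ℝ :=
  xhat β γ d * ((xhat β γ d + β) / (γ * xhat β γ d + 1)) ^ d

open Real Set

theorem xhat_spec {β γ : ℝ} (hβ : 0 < β) (hγ : 0 ≤ γ) (hβγ : β * γ < 1)
    {d : ℝ} (hd : (1 + Real.sqrt (β * γ)) / (1 - Real.sqrt (β * γ)) < d) :
    0 < xhat β γ d ∧ γ * (xhat β γ d) ^ 2 < β ∧
    (xhat β γ d + β) * (γ * xhat β γ d + 1) = d * ((1 - β * γ) * xhat β γ d) ∧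
    HasDerivAt (xhat β γ)
      (-((1 - β * γ) * xhat β γ d) / (β / xhat β γ d - γ * xhat β γ d)) d := by
  have hs0 : (0:ℝ) ≤ Real.sqrt (β * γ) := Real.sqrt_nonneg _
  have hs2 : Real.sqrt (β * γ) ^ 2 = β * γ := Real.sq_sqrt (by positivity)
  have hs1 : Real.sqrt (β * γ) < 1 := by nlinarith
  rcases eq_or_lt_of_le hγ with hγ0 | hγ0
  · -- γ = 0
    have hγ0 : γ = 0 := hγ0.symm
    subst hγ0
    have hsz : Real.sqrt (β * 0) = 0 := by simp
    rw [hsz] at hd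
    norm_num at hd
    have hd1 : (0:ℝ) < d - 1 := by linarith
    have hx : xhat β 0 = fun e => β / (e - 1) := by
      funext e; simp [xhat]
    rw [hx]
    have hxd : β / (d - 1) > 0 := by positivity
    refine ⟨hxd, by simpa using hβ, by field_simp [hd1.ne']; ring, ?_⟩
    have h1 := (hasDerivAt_const d β).div ((hasDerivAt_id d).sub_const 1)
      (by positivity : d - (1:ℝ) ≠ 0)
    refine h1.congr_deriv (Eq.symm ?_)
    simp only [id]
    have e1 : β / (β / (d - 1)) = d - 1 := by
      rw [div_div_eq_mul_div, mul_comm, mul_div_assoc, div_self hβ.ne', mul_one]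
    rw [e1]
    norm_num
    rw [neg_div, neg_div, div_div, sq]
  · -- γ > 0
    have hγne : γ ≠ 0 := hγ0.ne'
    set s := Real.sqrt (β * γ) with hs
    have hspos : 0 < s := Real.sqrt_pos.mpr (by positivity)
    set a : ℝ := -1 - β * γ + d * (1 - β * γ) with ha
    have ha2s : 2 * s < a := by
      have h1 : (1 + s) < d * (1 - s) := by
        rw [div_lt_iff₀ (by linarith)] at hd
        linarith
      nlinarith [hspos, hs2, h1]
    have hqsq : 0 < a ^ 2 - 4 * (β * γ) := by nlinarith [hspos]
    set q : ℝ := Real.sqrt (a ^ 2 - 4 * (β * γ)) with hqdef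
    have hq0 : 0 < q := Real.sqrt_pos.mpr hqsq
    have hq2 : q ^ 2 = a ^ 2 - 4 * (β * γ) := Real.sq_sqrt hqsq.le
    have hqa : q < a := by nlinarith [hspos]
    have hxeq : xhat β γ d = (a - q) / (2 * γ) := by
      rw [xhat, if_neg hγne]
    set x := xhat β γ d with hxdef
    have hx0 : 0 < x := by
      rw [hxeq]
      apply div_pos (by linarith) (by positivity)
    have h1 : 2 * γ * x = a - q := by
      rw [hxeq]; field_simp
    have hquad : γ * x ^ 2 - a * x + β = 0 := by
      have h4 : 4 * γ * (γ * x ^ 2 - a * x + β) = 0 := by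
        linear_combination (2 * γ * x - a - q) * h1 + hq2
      have h5 : (4:ℝ) * γ ≠ 0 := by positivity
      exact (mul_eq_zero.mp h4).resolve_left h5
    have hqx : q * x = β - γ * x ^ 2 := by
      have h4 : 2 * γ * (q * x - (β - γ * x ^ 2)) = 0 := by
        linear_combination 2 * γ * hquad + (a + q) * h1 - hq2
      have h5 : (2:ℝ) * γ ≠ 0 := by positivity
      have := (mul_eq_zero.mp h4).resolve_left h5
      linarith
    have hxb : γ * x ^ 2 < β := by
      have := mul_pos hq0 hx0
      linarith
    have hrel : (x + β) * (γ * x + 1) = d * ((1 - β * γ) * x) := by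
      linear_combination hquad + x * ha
    refine ⟨hx0, hxb, hrel, ?_⟩
    -- derivative
    have hA' : HasDerivAt (fun e : ℝ => -1 - β * γ + e * (1 - β * γ)) (1 - β * γ) d := by
      simpa using ((hasDerivAt_id d).mul_const (1 - β * γ)).const_add (-1 - β * γ)
    have hu' : HasDerivAt (fun e : ℝ => (-1 - β * γ + e * (1 - β * γ)) ^ 2 - 4 * (β * γ))
        (2 * a * (1 - β * γ)) d := by
      have := (hA'.pow 2).sub_const (4 * (β * γ))
      refine this.congr_deriv (Eq.symm ?_)
      simp [ha]
    have hsq' : HasDerivAt (fun e : ℝ => Real.sqrt ((-1 - β * γ + e * (1 - β * γ)) ^ 2 - 4 * (β * γ)))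
        (2 * a * (1 - β * γ) / (2 * q)) d := by
      have h0 := (Real.hasDerivAt_sqrt hqsq.ne').comp d hu'
      refine h0.congr_deriv (Eq.symm ?_)
      rw [← hqdef]
      field_simp
    have hall := (hA'.sub hsq').div_const (2 * γ)
    have hfn : xhat β γ = fun e : ℝ =>
        (-1 - β * γ + e * (1 - β * γ) -
          Real.sqrt ((-1 - β * γ + e * (1 - β * γ)) ^ 2 - 4 * (β * γ))) / (2 * γ) := by
      funext e; rw [xhat, if_neg hγne]
    rw [hfn]
    refine hall.congr_deriv (Eq.symm ?_)
    have hbxq : β / x - γ * x = q := by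
      field_simp
      linear_combination -hqx
    rw [hbxq, hxeq]
    rw [div_eq_div_iff (by positivity) (by positivity)]
    field_simp
    ring

noncomputable def hfun (β γ x : ℝ) : ℝ :=
  2 * (1 - β * γ) * x + (γ * x ^ 2 - β) * Real.log ((x + β) / (γ * x + 1))

set_option maxHeartbeats 2000000 in
theorem lamC_deriv {β γ : ℝ} (hβ : 0 < β) (hγ : 0 ≤ γ) (hβγ : β * γ < 1)
    {d : ℝ} (hd : (1 + Real.sqrt (β * γ)) / (1 - Real.sqrt (β * γ)) < d) :
    HasDerivAt (lamC β γ)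
      (-(((xhat β γ d + β) / (γ * xhat β γ d + 1)) ^ d * hfun β γ (xhat β γ d) /
        (β / xhat β γ d - γ * xhat β γ d))) d := by
  obtain ⟨hx0, hxb, hrel, hx'⟩ := xhat_spec hβ hγ hβγ hd
  set x := xhat β γ d with hxdef
  have hden : (0:ℝ) < γ * x + 1 := by positivity
  have hnum : (0:ℝ) < x + β := by positivity
  have hr : (0:ℝ) < (x + β) / (γ * x + 1) := by positivity
  have hq0 : (0:ℝ) < β / x - γ * x := by
    have h1 : γ * x < β / x := by
      rw [lt_div_iff₀ hx0]
      nlinarith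
    linarith
  obtain ⟨q, hqdef⟩ : ∃ q, β / x - γ * x = q := ⟨_, rfl⟩
  rw [hqdef] at hq0 hx'
  have hqx : q * x = β - γ * x ^ 2 := by
    rw [← hqdef]; field_simp
  obtain ⟨x', hx'def⟩ : ∃ v, -((1 - β * γ) * x) / q = v := ⟨_, rfl⟩
  rw [hx'def] at hx'
  have hx'q : x' * q = -((1 - β * γ) * x) := by
    rw [← hx'def, div_mul_cancel₀ _ hq0.ne']
  have hB : HasDerivAt (fun e => (xhat β γ e + β) / (γ * xhat β γ e + 1))
      ((x' * (γ * x + 1) - (x + β) * (γ * x')) / (γ * x + 1) ^ 2) d :=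
    (hx'.add_const β).div ((hx'.const_mul γ).add_const 1) hden.ne'
  have hpow := hB.rpow (hasDerivAt_id d) hr
  have hprod := hx'.mul hpow
  have hfn : lamC β γ = fun e => xhat β γ e * ((xhat β γ e + β) / (γ * xhat β γ e + 1)) ^ e := rfl
  rw [hfn, hqdef]
  refine hprod.congr_deriv (Eq.symm ?_)
  simp only [id]
  set P : ℝ := ((x + β) / (γ * x + 1)) ^ d with hP
  set L : ℝ := Real.log ((x + β) / (γ * x + 1)) with hL
  have e1 : (x' * (γ * x + 1) - (x + β) * (γ * x')) = x' * (1 - β * γ) := by ring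
  rw [e1]
  have e2 : ((x + β) / (γ * x + 1) : ℝ) ^ (d - 1)
      = P * (γ * x + 1) / (x + β) := by
    rw [Real.rpow_sub hr, Real.rpow_one, hP, div_div_eq_mul_div]
  rw [e2]
  have e3 : x * (x' * (1 - β * γ) / (γ * x + 1) ^ 2 * d * (P * (γ * x + 1) / (x + β))) = x' * P := by
    field_simp
    linear_combination (-(x' * P)) * hrel
  rw [mul_add, e3, hfun]
  rw [← neg_div, div_eq_iff hq0.ne']
  linear_combination (-2 * P) * hx'q + (-P * L) * hqx

theorem hfun_pos {β γ : ℝ} (hβ : 0 < β) (hγ : 0 ≤ γ) (hβγ : β * γ < 1) (hβ1 : β ≤ 1)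
    {x : ℝ} (hx : 0 < x) (hxb : γ * x ^ 2 < β) : 0 < hfun β γ x := by
  have hden : (0:ℝ) < γ * x + 1 := by positivity
  have hnum : (0:ℝ) < x + β := by positivity
  have hr : (0:ℝ) < (x + β) / (γ * x + 1) := by positivity
  rw [hfun]
  rcases le_or_gt ((x + β) / (γ * x + 1)) 1 with hle | hlt
  · have hL : Real.log ((x + β) / (γ * x + 1)) ≤ 0 := Real.log_nonpos hr.le hle
    have h2 : 0 ≤ (β - γ * x ^ 2) * (-(Real.log ((x + β) / (γ * x + 1)))) :=
      mul_nonneg (by linarith) (by linarith)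
    nlinarith
  · have hL : 0 < Real.log ((x + β) / (γ * x + 1)) := Real.log_pos hlt
    have hgt : γ * x + 1 < x + β := by
      rw [lt_div_iff₀ hden] at hlt
      linarith
    have hB : 0 < x * (1 - γ) + (β - 1) := by nlinarith
    have h1 : Real.log ((x + β) / (γ * x + 1)) ≤ (x + β) / (γ * x + 1) - 1 :=
      Real.log_le_sub_one_of_pos hr
    have h2 : (x + β) / (γ * x + 1) - 1 = (x * (1 - γ) + (β - 1)) / (γ * x + 1) := by
      field_simp
      ring
    have h3 : (x * (1 - γ) + (β - 1)) / (γ * x + 1) ≤ x * (1 - γ) + (β - 1) :=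
      div_le_self hB.le (by nlinarith [mul_nonneg hγ hx.le])
    have hL2 : Real.log ((x + β) / (γ * x + 1)) ≤ x * (1 - γ) + (β - 1) := by
      rw [h2] at h1
      linarith
    -- (β - γx²) * L ≤ β * (x*(1-γ)) + β*(β-1) ≤ β*x*(1-γ)
    have h4 : (β - γ * x ^ 2) * Real.log ((x + β) / (γ * x + 1)) ≤ β * (x * (1 - γ) + (β - 1)) := by
      apply mul_le_mul (by nlinarith [mul_nonneg hγ (sq_nonneg x)]) hL2 hL.le hβ.le
    nlinarith [mul_pos hx (sub_pos.mpr hβγ)]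

theorem hfun_contOn {β γ : ℝ} (hβ : 0 < β) (hγ : 0 ≤ γ) :
    ContinuousOn (hfun β γ) (Set.Ici 0) := by
  have hfn : hfun β γ = fun x => 2 * (1 - β * γ) * x +
      (γ * x ^ 2 - β) * Real.log ((x + β) / (γ * x + 1)) := rfl
  rw [hfn]
  apply ContinuousOn.add (by fun_prop)
  apply ContinuousOn.mul (by fun_prop)
  apply ContinuousOn.log
  · apply ContinuousOn.div (by fun_prop) (by fun_prop)
    intro x hx
    simp only [Set.mem_Ici] at hx
    have : 0 < γ * x + 1 := by nlinarith [mul_nonneg hγ hx]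
    exact this.ne'
  · intro x hx
    simp only [Set.mem_Ici] at hx
    have h1 : 0 < x + β := by linarith
    have h2 : 0 < γ * x + 1 := by nlinarith [mul_nonneg hγ hx]
    positivity

theorem hfun_strictMono {β γ : ℝ} (hβ : 0 < β) (hγ : 0 ≤ γ) (hβγ : β * γ < 1) (hβ1 : 1 < β)
    {M : ℝ} (hM : γ * M ^ 2 ≤ β) : StrictMonoOn (hfun β γ) (Set.Icc 0 M) := by
  rcases le_or_gt M 0 with hM0 | hM0
  · intro a ha b hb hab
    have h1 : b ≤ a := (hb.2.trans hM0).trans ha.1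
    exact absurd hab (not_lt.mpr h1)
  apply strictMonoOn_of_deriv_pos (convex_Icc 0 M)
    ((hfun_contOn hβ hγ).mono (fun t ht => ht.1))
  intro x hx
  rw [interior_Icc] at hx
  obtain ⟨hx0, hxM⟩ := hx
  have hden : (0:ℝ) < γ * x + 1 := by positivity
  have hnum : (0:ℝ) < x + β := by positivity
  have hr : (0:ℝ) < (x + β) / (γ * x + 1) := by positivity
  have hγ1 : γ < 1 := by nlinarith
  have hx2 : x ^ 2 < M ^ 2 := by nlinarith
  have hγx2 : γ * x ^ 2 < β := by
    rcases eq_or_lt_of_le hγ with h | h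
    · rw [← h]; simpa using hβ
    · nlinarith
  have hlog : HasDerivAt (fun y => Real.log ((y + β) / (γ * y + 1)))
      ((1 - β * γ) / ((x + β) * (γ * x + 1))) x := by
    have hq := ((hasDerivAt_id x).add_const β).div
      (((hasDerivAt_id x).const_mul γ).add_const 1) hden.ne'
    have h0 := hq.log hr.ne'
    refine h0.congr_deriv (Eq.symm ?_)
    simp only [id, Pi.div_apply]
    field_simp
    ring
  have hpoly : HasDerivAt (fun y : ℝ => γ * y ^ 2 - β) (2 * γ * x) x := by
    have := ((hasDerivAt_pow 2 x).const_mul γ).sub_const β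
    refine this.congr_deriv (Eq.symm ?_)
    simp
    ring
  have h1 : HasDerivAt (fun y : ℝ => 2 * (1 - β * γ) * y) (2 * (1 - β * γ)) x := by
    simpa using (hasDerivAt_id x).const_mul (2 * (1 - β * γ))
  have hmain : HasDerivAt (hfun β γ)
      (2 * (1 - β * γ) + ((2 * γ * x) * Real.log ((x + β) / (γ * x + 1)) +
        (γ * x ^ 2 - β) * ((1 - β * γ) / ((x + β) * (γ * x + 1))))) x := by
    have hfn : hfun β γ = fun y => 2 * (1 - β * γ) * y +
        (γ * y ^ 2 - β) * Real.log ((y + β) / (γ * y + 1)) := rfl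
    rw [hfn]
    exact h1.add (hpoly.mul hlog)
  rw [hmain.deriv]
  have hrgt1 : 1 < (x + β) / (γ * x + 1) := by
    rw [lt_div_iff₀ hden]
    nlinarith
  have hL : 0 < Real.log ((x + β) / (γ * x + 1)) := Real.log_pos hrgt1
  have hbig : (β - γ * x ^ 2) * (1 - β * γ) / ((x + β) * (γ * x + 1)) < 1 - β * γ := by
    rw [div_lt_iff₀ (by positivity)]
    have hstep : β - γ * x ^ 2 < (x + β) * (γ * x + 1) := by
      nlinarith [mul_nonneg hγ (sq_nonneg x), mul_nonneg (mul_nonneg hβ.le hγ) hx0.le]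
    nlinarith [mul_lt_mul_of_pos_right hstep (sub_pos.mpr hβγ)]
  have e6 : (γ * x ^ 2 - β) * ((1 - β * γ) / ((x + β) * (γ * x + 1)))
      = -((β - γ * x ^ 2) * (1 - β * γ) / ((x + β) * (γ * x + 1))) := by
    ring
  rw [e6]
  have t2 : 0 ≤ 2 * γ * x * Real.log ((x + β) / (γ * x + 1)) :=
    mul_nonneg (by positivity) hL.le
  linarith [hbig, t2]

theorem d_anti {β γ : ℝ} (hβ : 0 < β) (hγ : 0 ≤ γ) (hβγ : β * γ < 1) {x y dx dy : ℝ}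
    (hx : 0 < x) (hxy : x < y) (hyb : γ * y ^ 2 ≤ β)
    (ex : (x + β) * (γ * x + 1) = dx * ((1 - β * γ) * x))
    (ey : (y + β) * (γ * y + 1) = dy * ((1 - β * γ) * y)) : dy < dx := by
  have hy : 0 < y := hx.trans hxy
  have hkey : (dx - dy) * ((1 - β * γ) * (x * y)) = (y - x) * (β - γ * (x * y)) := by
    linear_combination x * ey - y * ex
  have h1 : 0 < β - γ * (x * y) := by
    rcases eq_or_lt_of_le hγ with h | h
    · rw [← h]; simpa using hβ
    · nlinarith [mul_pos h (mul_pos hy (sub_pos.mpr hxy))]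
  have h2 : 0 < (1 - β * γ) * (x * y) := by
    have : 0 < 1 - β * γ := by linarith
    positivity
  nlinarith [mul_pos (sub_pos.mpr hxy) h1]

theorem d_gt_dbar {β γ : ℝ} (hβ : 0 < β) (hγ : 0 ≤ γ) (hβγ : β * γ < 1) {x d : ℝ}
    (hx : 0 < x) (hxb : γ * x ^ 2 < β)
    (ex : (x + β) * (γ * x + 1) = d * ((1 - β * γ) * x)) :
    (1 + Real.sqrt (β * γ)) / (1 - Real.sqrt (β * γ)) < d := by
  have hs0 : (0:ℝ) ≤ Real.sqrt (β * γ) := Real.sqrt_nonneg _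
  have hs2 : Real.sqrt (β * γ) ^ 2 = β * γ := Real.sq_sqrt (by positivity)
  have hs1 : Real.sqrt (β * γ) < 1 := by nlinarith
  set s := Real.sqrt (β * γ) with hs
  have hgb : Real.sqrt γ * Real.sqrt β = s := by
    rw [hs, ← Real.sqrt_mul hγ, mul_comm]
  have e2 : (Real.sqrt γ * x - Real.sqrt β) ^ 2 = γ * x ^ 2 - 2 * s * x + β := by
    have h1 : Real.sqrt γ ^ 2 = γ := Real.sq_sqrt hγ
    have h2 : Real.sqrt β ^ 2 = β := Real.sq_sqrt hβ.le
    linear_combination x ^ 2 * h1 + h2 - 2 * x * hgb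
  have hne : Real.sqrt γ * x - Real.sqrt β ≠ 0 := by
    intro h
    have h3 : Real.sqrt γ * x = Real.sqrt β := by linarith [sub_eq_zero.mp h]
    have h4 : γ * x ^ 2 = β := by
      have := congrArg (fun t => t ^ 2) h3
      simp only [mul_pow] at this
      rw [Real.sq_sqrt hγ, Real.sq_sqrt hβ.le] at this
      linarith
    linarith
  have hpos : 0 < γ * x ^ 2 - 2 * s * x + β := by
    rw [← e2]
    exact lt_of_le_of_ne (sq_nonneg _) (Ne.symm (pow_ne_zero 2 hne))
  have e5 : γ * x ^ 2 - 2 * s * x + β = d * ((1 - β * γ) * x) - (1 + s) ^ 2 * x := by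
    linear_combination ex + x * hs2
  have hd1 : (1 + s) ^ 2 * x < d * ((1 - β * γ) * x) := by linarith
  have hd2 : (1 + s) / (1 - s) * ((1 - β * γ) * x) = (1 + s) ^ 2 * x := by
    rw [div_mul_eq_mul_div, div_eq_iff (by linarith : (1:ℝ) - s ≠ 0)]
    linear_combination ((1 + s) * x) * hs2
  have hpos2 : 0 < (1 - β * γ) * x := by
    have : 0 < 1 - β * γ := by linarith
    positivity
  have := hd2 ▸ hd1
  exact lt_of_mul_lt_mul_right this hpos2.le

theorem lamC_deriv_neg {β γ : ℝ} (hβ : 0 < β) (hγ : 0 ≤ γ) (hβγ : β * γ < 1)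
    {d : ℝ} (hd : (1 + Real.sqrt (β * γ)) / (1 - Real.sqrt (β * γ)) < d)
    (hh : 0 < hfun β γ (xhat β γ d)) : deriv (lamC β γ) d < 0 := by
  obtain ⟨hx0, hxb, -, -⟩ := xhat_spec hβ hγ hβγ hd
  rw [(lamC_deriv hβ hγ hβγ hd).deriv]
  have hq0 : (0:ℝ) < β / xhat β γ d - γ * xhat β γ d := by
    have h1 : γ * xhat β γ d < β / xhat β γ d := by
      rw [lt_div_iff₀ hx0]; nlinarith
    linarith
  have hP : (0:ℝ) < ((xhat β γ d + β) / (γ * xhat β γ d + 1)) ^ d :=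
    Real.rpow_pos_of_pos (by positivity) d
  have : (0:ℝ) < ((xhat β γ d + β) / (γ * xhat β γ d + 1)) ^ d * hfun β γ (xhat β γ d) /
      (β / xhat β γ d - γ * xhat β γ d) := by positivity
  linarith

theorem lamC_deriv_pos {β γ : ℝ} (hβ : 0 < β) (hγ : 0 ≤ γ) (hβγ : β * γ < 1)
    {d : ℝ} (hd : (1 + Real.sqrt (β * γ)) / (1 - Real.sqrt (β * γ)) < d)
    (hh : hfun β γ (xhat β γ d) < 0) : 0 < deriv (lamC β γ) d := by
  obtain ⟨hx0, hxb, -, -⟩ := xhat_spec hβ hγ hβγ hd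
  rw [(lamC_deriv hβ hγ hβγ hd).deriv]
  have hq0 : (0:ℝ) < β / xhat β γ d - γ * xhat β γ d := by
    have h1 : γ * xhat β γ d < β / xhat β γ d := by
      rw [lt_div_iff₀ hx0]; nlinarith
    linarith
  have hP : (0:ℝ) < ((xhat β γ d + β) / (γ * xhat β γ d + 1)) ^ d :=
    Real.rpow_pos_of_pos (by positivity) d
  have : ((xhat β γ d + β) / (γ * xhat β γ d + 1)) ^ d * hfun β γ (xhat β γ d) /
      (β / xhat β γ d - γ * xhat β γ d) < 0 :=
    div_neg_of_neg_of_pos (mul_neg_of_pos_of_neg hP hh) hq0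
  linarith

/-- Monotonicity of `λ_c`: for `β ≤ 1` it is strictly decreasing on `(d̄, ∞)`;
for `β > 1` there is `d_c > d̄` with `λ_c` strictly decreasing on `(d̄, d_c)` and
strictly increasing on `(d_c, ∞)`, where `d̄ = (1+√(βγ))/(1−√(βγ))`. -/
theorem lamC_monotonicity
    (β γ : ℝ) (hβ : 0 < β) (hγ : 0 ≤ γ) (hβγ : β * γ < 1) :
    (β ≤ 1 → StrictAntiOn (lamC β γ)
      (Set.Ioi ((1 + Real.sqrt (β * γ)) / (1 - Real.sqrt (β * γ))))) ∧
    (1 < β → ∃ dc : ℝ, (1 + Real.sqrt (β * γ)) / (1 - Real.sqrt (β * γ)) < dc ∧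
      StrictAntiOn (lamC β γ)
        (Set.Ioo ((1 + Real.sqrt (β * γ)) / (1 - Real.sqrt (β * γ))) dc) ∧
      StrictMonoOn (lamC β γ) (Set.Ioi dc)) := by
  constructor
  · intro hβ1
    apply strictAntiOn_of_deriv_neg (convex_Ioi _)
    · intro d hd
      exact ((lamC_deriv hβ hγ hβγ hd).differentiableAt.continuousAt).continuousWithinAt
    · intro d hd
      rw [interior_Ioi] at hd
      obtain ⟨hx0, hxb, -, -⟩ := xhat_spec hβ hγ hβγ hd
      exact lamC_deriv_neg hβ hγ hβγ hd (hfun_pos hβ hγ hβγ hβ1 hx0 hxb)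
  · intro hβ1
    have hlogβ : 0 < Real.log β := Real.log_pos hβ1
    set X : ℝ := if γ = 0 then β * Real.log β + 1 else Real.sqrt (β / γ) with hXdef
    have hX0 : 0 < X := by
      rw [hXdef]
      split
      · positivity
      · next h =>
        have hγ' : 0 < γ := lt_of_le_of_ne hγ (Ne.symm h)
        exact Real.sqrt_pos.mpr (by positivity)
    have hXb : γ * X ^ 2 ≤ β := by
      rw [hXdef]
      split
      · next h => rw [h]; simpa using hβ.le
      · next h =>
        have hγ' : 0 < γ := lt_of_le_of_ne hγ (Ne.symm h)
        rw [Real.sq_sqrt (by positivity : (0:ℝ) ≤ β / γ)]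
        rw [mul_div_cancel₀ _ hγ'.ne']
    have hfX : 0 < hfun β γ X := by
      rw [hfun]
      rcases eq_or_lt_of_le hγ with h | h
      · -- γ = 0
        have hγ0 : γ = 0 := h.symm
        subst hγ0
        have hXv : X = β * Real.log β + 1 := by rw [hXdef]; simp
        have hXβ : (0:ℝ) < X + β := by linarith
        have k1 : Real.log (X + β) = Real.log ((X + β) / β) + Real.log β := by
          rw [Real.log_div hXβ.ne' hβ.ne']
          ring
        have k2 : Real.log ((X + β) / β) ≤ (X + β) / β - 1 :=
          Real.log_le_sub_one_of_pos (by positivity)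
        have k3 : β * Real.log (X + β) ≤ X + β * Real.log β := by
          rw [k1]
          have := mul_le_mul_of_nonneg_left k2 hβ.le
          have k4 : β * ((X + β) / β - 1) = X := by field_simp; ring
          nlinarith
        simp only [zero_mul, mul_zero, zero_add, sub_zero, zero_sub, mul_one]
        rw [div_one]
        nlinarith [hX0, hXv, k3]
      · -- γ > 0
        have hXv : X = Real.sqrt (β / γ) := by rw [hXdef, if_neg h.ne']
        have hXsq : γ * X ^ 2 = β := by
          rw [hXv, Real.sq_sqrt (by positivity : (0:ℝ) ≤ β / γ), mul_div_cancel₀ _ h.ne']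
        rw [hXsq]
        simp only [sub_self, zero_mul, add_zero]
        have : 0 < 1 - β * γ := by linarith
        positivity
    have hf0 : hfun β γ 0 < 0 := by
      rw [hfun]
      norm_num
      exact mul_pos hβ hlogβ
    obtain ⟨xc, hxcm, hxc0⟩ :=
      intermediate_value_Ioo hX0.le ((hfun_contOn hβ hγ).mono (fun t ht => ht.1))
        (Set.mem_Ioo.mpr ⟨hf0, hfX⟩)
    obtain ⟨hxc0', hxcX⟩ := hxcm
    have hxcb : γ * xc ^ 2 < β := by
      rcases eq_or_lt_of_le hγ with h | h
      · rw [← h]; simpa using hβ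
      · have h2 : xc ^ 2 < X ^ 2 := by nlinarith
        have := mul_lt_mul_of_pos_left h2 h
        linarith
    have h1βγ : 0 < 1 - β * γ := by linarith
    set dc : ℝ := (xc + β) * (γ * xc + 1) / ((1 - β * γ) * xc) with hdcdef
    have hrelc : (xc + β) * (γ * xc + 1) = dc * ((1 - β * γ) * xc) := by
      rw [hdcdef, div_mul_cancel₀]
      exact (by positivity : (0:ℝ) < (1 - β * γ) * xc).ne'
    have hdcbar := d_gt_dbar hβ hγ hβγ hxc0' hxcb hrelc
    refine ⟨dc, hdcbar, ?_, ?_⟩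
    · apply strictAntiOn_of_deriv_neg (convex_Ioo _ _)
      · intro d hd
        exact ((lamC_deriv hβ hγ hβγ hd.1).differentiableAt.continuousAt).continuousWithinAt
      · intro d hd
        rw [interior_Ioo] at hd
        obtain ⟨hdl, hdr⟩ := hd
        obtain ⟨hx0, hxb, hrel, -⟩ := xhat_spec hβ hγ hβγ hdl
        apply lamC_deriv_neg hβ hγ hβγ hdl
        set x := xhat β γ d with hx
        have hxcx : xc < x := by
          rcases lt_trichotomy x xc with h | h | h
          · exact absurd (d_anti hβ hγ hβγ hx0 h hxcb.le hrel hrelc) (by linarith)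
          · exfalso
            rw [h] at hrel
            have h2 : dc * ((1 - β * γ) * xc) = d * ((1 - β * γ) * xc) := by
              rw [← hrel, hrelc]
            have h3 : dc = d :=
              mul_right_cancel₀ (by positivity : (0:ℝ) < (1 - β * γ) * xc).ne' h2
            linarith
          · exact h
        have hMb : γ * (max x X) ^ 2 ≤ β := by
          rcases le_total x X with h | h
          · rw [max_eq_right h]; exact hXb
          · rw [max_eq_left h]; exact hxb.le
        have hmono := hfun_strictMono hβ hγ hβγ hβ1 hMb
        have := hmono ⟨hxc0'.le, le_trans hxcx.le (le_max_left x X)⟩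
          ⟨hx0.le, le_max_left x X⟩ hxcx
        rw [hxc0] at this
        exact this
    · apply strictMonoOn_of_deriv_pos (convex_Ioi _)
      · intro d hd
        have hdl : (1 + Real.sqrt (β * γ)) / (1 - Real.sqrt (β * γ)) < d :=
          hdcbar.trans hd
        exact ((lamC_deriv hβ hγ hβγ hdl).differentiableAt.continuousAt).continuousWithinAt
      · intro d hd
        rw [interior_Ioi] at hd
        have hdgt : dc < d := hd
        have hdl : (1 + Real.sqrt (β * γ)) / (1 - Real.sqrt (β * γ)) < d :=
          hdcbar.trans hdgt
        obtain ⟨hx0, hxb, hrel, -⟩ := xhat_spec hβ hγ hβγ hdl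
        apply lamC_deriv_pos hβ hγ hβγ hdl
        set x := xhat β γ d with hx
        have hxcx : x < xc := by
          rcases lt_trichotomy x xc with h | h | h
          · exact h
          · exfalso
            rw [h] at hrel
            have h2 : dc * ((1 - β * γ) * xc) = d * ((1 - β * γ) * xc) := by
              rw [← hrel, hrelc]
            have h3 : dc = d :=
              mul_right_cancel₀ (by positivity : (0:ℝ) < (1 - β * γ) * xc).ne' h2
            linarith
          · exact absurd (d_anti hβ hγ hβγ hxc0' h hxb.le hrelc hrel) (by linarith)
        have hMb : γ * (max xc X) ^ 2 ≤ β := by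
          rcases le_total xc X with h | h
          · rw [max_eq_right h]; exact hXb
          · rw [max_eq_left h]; exact hxcb.le
        have hmono := hfun_strictMono hβ hγ hβγ hβ1 hMb
        have := hmono ⟨hx0.le, le_trans hxcx.le (le_max_left xc X)⟩
          ⟨hxc0'.le, le_max_left xc X⟩ hxcx
        rw [hxc0] at this
        exact this
end

section
/- Let β > 0 and γ ≥ 0, let d > 1 be a real number with √(βγ) ≤ (d−1)/(d+1), and let λ ∈ (0, λ_c(d)). If x̄ > 0 satisfies the fixed point equation x̄ = λ·((γx̄+1)/(x̄+β))^d, then x̄ < x̂_d and d(1−βγ)x̄/((γx̄+1)(x̄+β)) < 1. -/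
/-- Monotonicity of `F(x) = x ((x+β)/(γx+1))^d` on positives. -/
lemma Fmono (β γ d : ℝ) (hβ : 0 < β) (hγ : 0 ≤ γ) (hd : 0 ≤ d) (hbg : β * γ < 1)
    {a b : ℝ} (ha : 0 < a) (hab : a ≤ b) :
    a * ((a + β) / (γ * a + 1)) ^ d ≤ b * ((b + β) / (γ * b + 1)) ^ d := by
  have hb : 0 < b := lt_of_lt_of_le ha hab
  have hda : 0 < γ * a + 1 := by positivity
  have hdb : 0 < γ * b + 1 := by positivity
  have hna : 0 < a + β := by linarith
  have hnb : 0 < b + β := by linarith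
  have hfrac : (a + β) / (γ * a + 1) ≤ (b + β) / (γ * b + 1) := by
    rw [div_le_div_iff₀ hda hdb]; nlinarith
  have h2 := Real.rpow_le_rpow (le_of_lt (div_pos hna hda)) hfrac hd
  exact mul_le_mul hab h2 (Real.rpow_nonneg (le_of_lt (div_pos hna hda)) d) hb.le

/-- Facts about `xhat` in the case `γ > 0`. -/
lemma xhat_facts (β γ d : ℝ) (hβ : 0 < β) (hγ : 0 < γ) (hd : 1 < d)
    (hβγ : Real.sqrt (β * γ) ≤ (d - 1) / (d + 1)) :
    0 < xhat β γ d ∧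
    γ * (xhat β γ d) ^ 2 + (β * γ + 1 - d * (1 - β * γ)) * xhat β γ d + β = 0 ∧
    γ * (xhat β γ d) ^ 2 ≤ β := by
  have hs0 : (0:ℝ) ≤ β * γ := by positivity
  set t := Real.sqrt (β * γ) with htdef
  have ht2 : t ^ 2 = β * γ := Real.sq_sqrt hs0
  have htn : 0 ≤ t := Real.sqrt_nonneg _
  have hd2 : (0:ℝ) < d + 1 := by linarith
  have htle : t * (d + 1) ≤ d - 1 := by
    rw [← le_div_iff₀ hd2]; exact hβγ
  have ht1 : t < 1 := by nlinarith
  obtain ⟨A, hAdef⟩ : ∃ A : ℝ, A = -1 - β * γ + d * (1 - β * γ) := ⟨_, rfl⟩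
  have hAt : A = (d - 1) - t ^ 2 * (d + 1) := by rw [hAdef, ht2]; ring
  have hApos : 0 < A := by nlinarith
  have hf1 : 0 ≤ ((d - 1) - (d + 1) * t) * (t + 1) := by
    apply mul_nonneg; nlinarith; linarith
  have hf2 : 0 ≤ ((d + 1) * t + (d - 1)) * (1 - t) := by
    apply mul_nonneg; nlinarith; linarith
  have hdisc : 0 ≤ A ^ 2 - 4 * (β * γ) := by
    have : A ^ 2 - 4 * (β * γ) =
        (((d - 1) - (d + 1) * t) * (t + 1)) * (((d + 1) * t + (d - 1)) * (1 - t)) := by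
      rw [hAt, ← ht2]; ring
    rw [this]; exact mul_nonneg hf1 hf2
  obtain ⟨D, hDdef⟩ : ∃ D : ℝ, D = Real.sqrt (A ^ 2 - 4 * (β * γ)) := ⟨_, rfl⟩
  have hD2 : D ^ 2 = A ^ 2 - 4 * (β * γ) := by rw [hDdef]; exact Real.sq_sqrt hdisc
  have hDn : 0 ≤ D := hDdef ▸ Real.sqrt_nonneg _
  have hspos : 0 < β * γ := mul_pos hβ hγ
  have hDltA : D < A := by nlinarith
  have hxe : xhat β γ d = (A - D) / (2 * γ) := by
    rw [xhat, if_neg hγ.ne', ← hAdef, ← hDdef]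
  have hpos : 0 < xhat β γ d := by
    rw [hxe]; exact div_pos (by linarith) (by linarith)
  refine ⟨hpos, ?_, ?_⟩
  · have hc : β * γ + 1 - d * (1 - β * γ) = -A := by rw [hAdef]; ring
    rw [hxe, hc]
    have h4γ : (4 : ℝ) * γ ≠ 0 := by positivity
    calc γ * ((A - D) / (2 * γ)) ^ 2 + -A * ((A - D) / (2 * γ)) + β
        = (D ^ 2 - (A ^ 2 - 4 * (β * γ))) / (4 * γ) := by field_simp; ring
      _ = 0 := by rw [hD2]; simp
  · rw [hxe]
    have h1 : γ * ((A - D) / (2 * γ)) ^ 2 = (A - D) ^ 2 / (4 * γ) := by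
      field_simp; ring
    rw [h1, div_le_iff₀ (by positivity)]
    nlinarith [hD2, mul_nonneg hDn (sub_nonneg.mpr hDltA.le)]

/-- If `λ ∈ (0, λ_c(d))` and `x̄ > 0` is a fixed point of `x ↦ λ((γx+1)/(x+β))^d`,
then `x̄ < x̂_d` and `d(1−βγ)x̄/((γx̄+1)(x̄+β)) < 1`. -/
theorem fixed_point_lt_xhat
    (β γ d : ℝ) (hβ : 0 < β) (hγ : 0 ≤ γ) (hd : 1 < d)
    (hβγ : Real.sqrt (β * γ) ≤ (d - 1) / (d + 1))
    (lam : ℝ) (hl : 0 < lam) (hlc : lam < lamC β γ d)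
    (xbar : ℝ) (hx : 0 < xbar)
    (hfix : xbar = lam * ((γ * xbar + 1) / (xbar + β)) ^ d) :
    xbar < xhat β γ d ∧
    d * (1 - β * γ) * xbar / ((γ * xbar + 1) * (xbar + β)) < 1 := by
  have hd1 : (0:ℝ) < d - 1 := by linarith
  have hd2 : (0:ℝ) < d + 1 := by linarith
  have hs0 : (0:ℝ) ≤ β * γ := by positivity
  have hsle : β * γ ≤ ((d - 1) / (d + 1)) ^ 2 := by
    calc β * γ = (Real.sqrt (β * γ)) ^ 2 := (Real.sq_sqrt hs0).symm
      _ ≤ ((d - 1) / (d + 1)) ^ 2 := by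
          apply pow_le_pow_left₀ (Real.sqrt_nonneg _) hβγ
  have hfrac1 : ((d - 1) / (d + 1)) ^ 2 < 1 := by
    rw [div_pow, div_lt_one (by positivity)]; nlinarith
  have hbg1 : β * γ < 1 := lt_of_le_of_lt hsle hfrac1
  -- `lam = F xbar`
  have hden : 0 < xbar + β := by linarith
  have hnum : 0 < γ * xbar + 1 := by positivity
  have hr : 0 < (γ * xbar + 1) / (xbar + β) := div_pos hnum hden
  have hr' : 0 < (xbar + β) / (γ * xbar + 1) := div_pos hden hnum
  have hlam : xbar * ((xbar + β) / (γ * xbar + 1)) ^ d = lam := by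
    have h2 : ((γ * xbar + 1) / (xbar + β)) ^ d * ((xbar + β) / (γ * xbar + 1)) ^ d
        = 1 := by
      rw [← Real.mul_rpow hr.le hr'.le]
      have : (γ * xbar + 1) / (xbar + β) * ((xbar + β) / (γ * xbar + 1)) = 1 := by
        field_simp
      rw [this, Real.one_rpow]
    calc xbar * ((xbar + β) / (γ * xbar + 1)) ^ d
        = lam * (((γ * xbar + 1) / (xbar + β)) ^ d *
            ((xbar + β) / (γ * xbar + 1)) ^ d) := by rw [← mul_assoc, ← hfix]
      _ = lam := by rw [h2, mul_one]
  -- positivity of xhat and quadratic facts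
  have hxhat : 0 < xhat β γ d ∧
      (γ = 0 → xhat β γ d = β / (d - 1)) ∧
      (0 < γ → γ * (xhat β γ d) ^ 2 + (β * γ + 1 - d * (1 - β * γ)) * xhat β γ d + β = 0
        ∧ γ * (xhat β γ d) ^ 2 ≤ β) := by
    rcases eq_or_lt_of_le hγ with h0 | hpos
    · refine ⟨?_, fun _ => ?_, fun h => absurd h (by rw [← h0]; exact lt_irrefl 0)⟩
      · rw [xhat, if_pos h0.symm]; exact div_pos hβ hd1
      · rw [xhat, if_pos h0.symm]
    · obtain ⟨h1, h2, h3⟩ := xhat_facts β γ d hβ hpos hd hβγ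
      exact ⟨h1, fun h => absurd h hpos.ne', fun _ => ⟨h2, h3⟩⟩
  obtain ⟨hxp, hx0, hxq⟩ := hxhat
  -- part 1
  have hlt : xbar < xhat β γ d := by
    by_contra h
    push_neg at h
    have := Fmono β γ d hβ hγ (by linarith) hbg1 hxp h
    rw [hlam] at this
    have : lamC β γ d ≤ lam := by rw [lamC]; exact this
    linarith
  refine ⟨hlt, ?_⟩
  -- part 2
  rw [div_lt_one (by positivity)]
  rcases eq_or_lt_of_le hγ with h0 | hpos
  · have hxe := hx0 h0.symm
    rw [hxe] at hlt
    rw [lt_div_iff₀ hd1] at hlt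
    rw [← h0]
    nlinarith [hlt, hx, hβ]
  · obtain ⟨hroot, hsmall⟩ := hxq hpos
    have hkey : γ * xbar * xhat β γ d < β := by
      nlinarith [mul_pos hpos hxp, hlt]
    nlinarith [hroot, hkey, mul_pos (sub_pos.mpr hlt) (sub_pos.mpr hkey),
      hxp, hx, mul_pos hx hxp]
end

section
/- Let μ ≥ −1 with μ ≠ 0 and let 0 < k < π/(2·ln(μ+4)). Then the equation k·e^{θ/k}·sin θ + e^{θ/k}·cos θ + μ = 0 has a unique root θ₀ in the interval (0, π]. Moreover, defining r_{k,2}(θ) := (1/2)·ln(1 + μ²e^{−2θ/k} + 2μe^{−θ/k}cos θ): if μ > 0 then r_{k,2} is strictly decreasing on (0, θ₀) and strictly increasing on (θ₀, π); if μ < 0 then r_{k,2} is strictly increasing on (0, θ₀) and strictly decreasing on (θ₀, π). -/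
open Real Set

private lemma g_hasDeriv (μ k : ℝ) (hk : 0 < k) (θ : ℝ) :
    HasDerivAt (fun t : ℝ => k * Real.exp (t / k) * Real.sin t + Real.exp (t / k) * Real.cos t + μ)
      ((k + 1 / k) * Real.exp (θ / k) * Real.cos θ) θ := by
  have he : HasDerivAt (fun t : ℝ => Real.exp (t / k)) (Real.exp (θ / k) * (1 / k)) θ :=
    ((hasDerivAt_id θ).div_const k).exp
  have hke : HasDerivAt (fun t : ℝ => k * Real.exp (t / k)) (k * (Real.exp (θ / k) * (1 / k))) θ :=
    he.const_mul k
  have H := ((hke.mul (Real.hasDerivAt_sin θ)).add (he.mul (Real.hasDerivAt_cos θ))).add_const μ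
  refine H.congr_deriv ?_
  field_simp
  ring

private lemma r_hasDeriv (μ k : ℝ) (hk : 0 < k) (x : ℝ)
    (hf : (1 + μ ^ 2 * Real.exp (-2 * x / k) + 2 * μ * Real.exp (-x / k) * Real.cos x) ≠ 0) :
    HasDerivAt (fun θ : ℝ => (1 / 2) * Real.log
        (1 + μ ^ 2 * Real.exp (-2 * θ / k) + 2 * μ * Real.exp (-θ / k) * Real.cos θ))
      (-(μ / k) * Real.exp (-2 * x / k) *
          (k * Real.exp (x / k) * Real.sin x + Real.exp (x / k) * Real.cos x + μ) /
        (1 + μ ^ 2 * Real.exp (-2 * x / k) + 2 * μ * Real.exp (-x / k) * Real.cos x)) x := by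
  have H1 : HasDerivAt (fun t : ℝ => Real.exp (-2 * t / k)) (Real.exp (-2 * x / k) * (-2 * 1 / k)) x :=
    (((hasDerivAt_id x).const_mul (-2)).div_const k).exp
  have H2 : HasDerivAt (fun t : ℝ => Real.exp (-t / k)) (Real.exp (-x / k) * (-1 / k)) x := by
    have := (((hasDerivAt_id x).neg).div_const k).exp
    simpa using this
  have HF : HasDerivAt (fun t : ℝ => 1 + μ ^ 2 * Real.exp (-2 * t / k) + 2 * μ * Real.exp (-t / k) * Real.cos t)
      (μ ^ 2 * (Real.exp (-2 * x / k) * (-2 * 1 / k)) +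
        ((2 * μ) * (Real.exp (-x / k) * (-1 / k)) * Real.cos x + (2 * μ * Real.exp (-x / k)) * (-Real.sin x))) x :=
    ((H1.const_mul (μ ^ 2)).const_add 1).add ((H2.const_mul (2 * μ)).mul (Real.hasDerivAt_cos x))
  have HR := (HF.log hf).const_mul (1 / 2 : ℝ)
  refine HR.congr_deriv ?_
  symm
  have hab : Real.exp (-x / k) * Real.exp (x / k) = 1 := by
    rw [← Real.exp_add, show -x / k + x / k = 0 by ring, Real.exp_zero]
  have h2 : Real.exp (-2 * x / k) = Real.exp (-x / k) * Real.exp (-x / k) := by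
    rw [← Real.exp_add]; congr 1; ring
  rw [h2]
  set A := Real.exp (x / k)
  set B := Real.exp (-x / k)
  set F := (1 + μ ^ 2 * (B * B) + 2 * μ * B * Real.cos x)
  have hk' : k * k⁻¹ = 1 := mul_inv_cancel₀ hk.ne'
  linear_combination (-(μ * Real.sin x + μ / k * Real.cos x) * B / F) * hab -
    (μ * B * B * A * Real.sin x / F) * hk'

private lemma f_pos (μ k x : ℝ) (hx : x ∈ Set.Ioo (0:ℝ) Real.pi) :
    0 < 1 + μ ^ 2 * Real.exp (-2 * x / k) + 2 * μ * Real.exp (-x / k) * Real.cos x := by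
  have h2 : Real.exp (-2 * x / k) = Real.exp (-x / k) * Real.exp (-x / k) := by
    rw [← Real.exp_add]; congr 1; ring
  have hs : 0 < Real.sin x := Real.sin_pos_of_pos_of_lt_pi hx.1 hx.2
  rw [h2]
  nlinarith [sq_nonneg (μ * Real.exp (-x / k) + Real.cos x), Real.sin_sq_add_cos_sq x, hs]

private lemma mono_anti (μ k a b : ℝ) (hk : 0 < k)
    (hsub : Set.Ioo a b ⊆ Set.Ioo 0 Real.pi)
    (hsign : ∀ x ∈ Set.Ioo a b,
      0 < μ * (k * Real.exp (x / k) * Real.sin x + Real.exp (x / k) * Real.cos x + μ)) :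
    StrictAntiOn (fun θ : ℝ => (1 / 2) * Real.log
        (1 + μ ^ 2 * Real.exp (-2 * θ / k) + 2 * μ * Real.exp (-θ / k) * Real.cos θ))
      (Set.Ioo a b) := by
  apply strictAntiOn_of_deriv_neg (convex_Ioo a b)
  · intro x hx
    exact ((r_hasDeriv μ k hk x (f_pos μ k x (hsub hx)).ne').differentiableAt).continuousAt.continuousWithinAt
  · intro x hx
    rw [interior_Ioo] at hx
    have hF := f_pos μ k x (hsub hx)
    rw [(r_hasDeriv μ k hk x hF.ne').deriv]
    apply div_neg_of_neg_of_pos _ hF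
    have hE := Real.exp_pos (-2 * x / k)
    have h1 : 0 < μ * (k * Real.exp (x / k) * Real.sin x + Real.exp (x / k) * Real.cos x + μ)
        * Real.exp (-2 * x / k) / k := div_pos (mul_pos (hsign x hx) hE) hk
    have heq : -(μ / k) * Real.exp (-2 * x / k) *
        (k * Real.exp (x / k) * Real.sin x + Real.exp (x / k) * Real.cos x + μ) =
        -(μ * (k * Real.exp (x / k) * Real.sin x + Real.exp (x / k) * Real.cos x + μ)
          * Real.exp (-2 * x / k) / k) := by ring
    rw [heq]; linarith

private lemma mono_mono (μ k a b : ℝ) (hk : 0 < k)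
    (hsub : Set.Ioo a b ⊆ Set.Ioo 0 Real.pi)
    (hsign : ∀ x ∈ Set.Ioo a b,
      μ * (k * Real.exp (x / k) * Real.sin x + Real.exp (x / k) * Real.cos x + μ) < 0) :
    StrictMonoOn (fun θ : ℝ => (1 / 2) * Real.log
        (1 + μ ^ 2 * Real.exp (-2 * θ / k) + 2 * μ * Real.exp (-θ / k) * Real.cos θ))
      (Set.Ioo a b) := by
  apply strictMonoOn_of_deriv_pos (convex_Ioo a b)
  · intro x hx
    exact ((r_hasDeriv μ k hk x (f_pos μ k x (hsub hx)).ne').differentiableAt).continuousAt.continuousWithinAt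
  · intro x hx
    rw [interior_Ioo] at hx
    have hF := f_pos μ k x (hsub hx)
    rw [(r_hasDeriv μ k hk x hF.ne').deriv]
    apply div_pos _ hF
    have hE := Real.exp_pos (-2 * x / k)
    have h1 : μ * (k * Real.exp (x / k) * Real.sin x + Real.exp (x / k) * Real.cos x + μ)
        * Real.exp (-2 * x / k) / k < 0 := div_neg_of_neg_of_pos (mul_neg_of_neg_of_pos (hsign x hx) hE) hk
    have heq : -(μ / k) * Real.exp (-2 * x / k) *
        (k * Real.exp (x / k) * Real.sin x + Real.exp (x / k) * Real.cos x + μ) =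
        -(μ * (k * Real.exp (x / k) * Real.sin x + Real.exp (x / k) * Real.cos x + μ)
          * Real.exp (-2 * x / k) / k) := by ring
    rw [heq]; linarith


/-- For `μ ≥ −1`, `μ ≠ 0` and `0 < k < π/(2 ln(μ+4))`, the equation
`k e^{θ/k} sin θ + e^{θ/k} cos θ + μ = 0` has a unique root `θ₀ ∈ (0, π]`, and
`r_{k,2}(θ) = (1/2)ln(1 + μ²e^{−2θ/k} + 2μe^{−θ/k}cos θ)` is strictly monotone on
`(0, θ₀)` and `(θ₀, π)` (decreasing then increasing if `μ > 0`, increasing then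
decreasing if `μ < 0`). -/
theorem r_k2_unique_root_and_monotonicity
    (μ k : ℝ) (hμ : -1 ≤ μ) (hμ0 : μ ≠ 0) (hk : 0 < k)
    (hkπ : k < Real.pi / (2 * Real.log (μ + 4))) :
    ∃ θ₀ : ℝ, θ₀ ∈ Set.Ioc 0 Real.pi ∧
      k * Real.exp (θ₀ / k) * Real.sin θ₀ + Real.exp (θ₀ / k) * Real.cos θ₀ + μ = 0 ∧
      (∀ θ ∈ Set.Ioc 0 Real.pi,
        k * Real.exp (θ / k) * Real.sin θ + Real.exp (θ / k) * Real.cos θ + μ = 0 →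
        θ = θ₀) ∧
      (0 < μ →
        StrictAntiOn (fun θ : ℝ => (1 / 2) * Real.log
            (1 + μ ^ 2 * Real.exp (-2 * θ / k) + 2 * μ * Real.exp (-θ / k) * Real.cos θ))
          (Set.Ioo 0 θ₀) ∧
        StrictMonoOn (fun θ : ℝ => (1 / 2) * Real.log
            (1 + μ ^ 2 * Real.exp (-2 * θ / k) + 2 * μ * Real.exp (-θ / k) * Real.cos θ))
          (Set.Ioo θ₀ Real.pi)) ∧
      (μ < 0 →
        StrictMonoOn (fun θ : ℝ => (1 / 2) * Real.log
            (1 + μ ^ 2 * Real.exp (-2 * θ / k) + 2 * μ * Real.exp (-θ / k) * Real.cos θ))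
          (Set.Ioo 0 θ₀) ∧
        StrictAntiOn (fun θ : ℝ => (1 / 2) * Real.log
            (1 + μ ^ 2 * Real.exp (-2 * θ / k) + 2 * μ * Real.exp (-θ / k) * Real.cos θ))
          (Set.Ioo θ₀ Real.pi)) := by
  have hπ := Real.pi_pos
  set G : ℝ → ℝ := fun θ =>
    k * Real.exp (θ / k) * Real.sin θ + Real.exp (θ / k) * Real.cos θ + μ with hGdef
  have hGc : Continuous G := by fun_prop
  have hGd : ∀ θ, HasDerivAt G ((k + 1 / k) * Real.exp (θ / k) * Real.cos θ) θ :=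
    g_hasDeriv μ k hk
  have hkk : 0 < k + 1 / k := by positivity
  -- strict monotone on [0, π/2]
  have hmono : StrictMonoOn G (Set.Icc 0 (Real.pi / 2)) := by
    apply strictMonoOn_of_deriv_pos (convex_Icc _ _) hGc.continuousOn
    intro x hx
    rw [interior_Icc] at hx
    rw [(hGd x).deriv]
    have hc : 0 < Real.cos x := Real.cos_pos_of_mem_Ioo ⟨by linarith [hx.1], hx.2⟩
    positivity
  -- strict antitone on [π/2, π]
  have hanti : StrictAntiOn G (Set.Icc (Real.pi / 2) Real.pi) := by
    apply strictAntiOn_of_deriv_neg (convex_Icc _ _) hGc.continuousOn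
    intro x hx
    rw [interior_Icc] at hx
    rw [(hGd x).deriv]
    have hc : Real.cos x < 0 := Real.cos_neg_of_pi_div_two_lt_of_lt hx.1 (by linarith [hx.2])
    have : 0 < (k + 1 / k) * Real.exp (x / k) := by positivity
    exact mul_neg_of_pos_of_neg this hc
  have hG0 : G 0 = 1 + μ := by simp [hGdef]
  have hGhalf : 0 < G (Real.pi / 2) := by
    have := hmono (Set.left_mem_Icc.mpr (by linarith)) ⟨by linarith, le_rfl⟩ (by linarith)
    rw [hG0] at this
    linarith
  have hGπ : G Real.pi < 0 := by
    have hGπeq : G Real.pi = μ - Real.exp (Real.pi / k) := by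
      simp [hGdef]; ring
    have hlog : 0 < Real.log (μ + 4) := Real.log_pos (by linarith)
    have h1 : 2 * Real.log (μ + 4) < Real.pi / k := by
      rw [lt_div_iff₀ hk]
      calc 2 * Real.log (μ + 4) * k < 2 * Real.log (μ + 4) * (Real.pi / (2 * Real.log (μ + 4))) := by
            apply mul_lt_mul_of_pos_left hkπ (by positivity)
        _ = Real.pi := by field_simp
    have h2 : Real.exp (2 * Real.log (μ + 4)) = (μ + 4) ^ 2 := by
      rw [show (2 : ℝ) * Real.log (μ + 4) = Real.log (μ + 4) + Real.log (μ + 4) by ring,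
        Real.exp_add, Real.exp_log (by linarith), sq]
    have h3 : (μ + 4) ^ 2 < Real.exp (Real.pi / k) := by
      rw [← h2]; exact Real.exp_lt_exp.mpr h1
    have h4 : μ < (μ + 4) ^ 2 := by nlinarith [sq_nonneg (2 * μ + 7)]
    rw [hGπeq]; linarith
  -- intermediate value
  obtain ⟨θ₀, hθ₀mem, hθ₀⟩ : ∃ θ₀ ∈ Set.Ioo (Real.pi / 2) Real.pi, G θ₀ = 0 := by
    have := intermediate_value_Ioo' (by linarith : Real.pi / 2 ≤ Real.pi) hGc.continuousOn
    have h0 : (0 : ℝ) ∈ Set.Ioo (G Real.pi) (G (Real.pi / 2)) := ⟨hGπ, hGhalf⟩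
    obtain ⟨θ₀, hmem, heq⟩ := this h0
    exact ⟨θ₀, hmem, heq⟩
  have hθ₀pos : 0 < θ₀ := by linarith [hθ₀mem.1]
  have hθ₀π : θ₀ < Real.pi := hθ₀mem.2
  -- sign of G on (0, θ₀) and (θ₀, π)
  have hGpos : ∀ x ∈ Set.Ioo 0 θ₀, 0 < G x := by
    intro x hx
    rcases le_or_gt x (Real.pi / 2) with h | h
    · have := hmono (Set.left_mem_Icc.mpr (by linarith)) ⟨hx.1.le, h⟩ hx.1
      rw [hG0] at this; linarith
    · have := hanti ⟨h.le, by linarith [hx.2]⟩ ⟨hθ₀mem.1.le, hθ₀π.le⟩ hx.2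
      rw [hθ₀] at this; linarith
  have hGneg : ∀ x ∈ Set.Ioo θ₀ Real.pi, G x < 0 := by
    intro x hx
    have := hanti ⟨hθ₀mem.1.le, hθ₀π.le⟩ ⟨by linarith [hθ₀mem.1, hx.1], hx.2.le⟩ hx.1
    rw [hθ₀] at this; linarith
  refine ⟨θ₀, ⟨hθ₀pos, hθ₀π.le⟩, hθ₀, ?_, ?_, ?_⟩
  · -- uniqueness
    intro θ hθmem hθeq
    rcases le_or_gt θ (Real.pi / 2) with h | h
    · exfalso
      have h1 := hmono (Set.left_mem_Icc.mpr (by linarith)) ⟨hθmem.1.le, h⟩ hθmem.1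
      rw [hG0] at h1
      have h2 : G θ = 0 := hθeq
      linarith
    · exact hanti.injOn ⟨h.le, hθmem.2⟩ ⟨hθ₀mem.1.le, hθ₀π.le⟩ (by rw [show G θ = 0 from hθeq, hθ₀])
  · intro hμpos
    constructor
    · exact mono_anti μ k 0 θ₀ hk (Set.Ioo_subset_Ioo le_rfl hθ₀π.le)
        (fun x hx => mul_pos hμpos (hGpos x hx))
    · exact mono_mono μ k θ₀ Real.pi hk (Set.Ioo_subset_Ioo hθ₀pos.le le_rfl)
        (fun x hx => mul_neg_of_pos_of_neg hμpos (hGneg x hx))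
  · intro hμneg
    constructor
    · exact mono_mono μ k 0 θ₀ hk (Set.Ioo_subset_Ioo le_rfl hθ₀π.le)
        (fun x hx => mul_neg_of_neg_of_pos hμneg (hGpos x hx))
    · exact mono_anti μ k θ₀ Real.pi hk (Set.Ioo_subset_Ioo hθ₀pos.le le_rfl)
        (fun x hx => mul_pos_of_neg_of_neg hμneg (hGneg x hx))
end

section
/- Let μ ≥ −1, let 0 < k < π/(2·ln(μ+4)), and let θ ∈ (0, π]. Then: (i) 1 + μ·e^{−θ/k}·cos θ > 0, and (ii) k·e^{θ/k} + μk·cos θ + μ·sin θ > 0. -/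
/-- For `μ ≥ −1`, `0 < k < π/(2 ln(μ+4))` and `θ ∈ (0, π]`:
(i) `1 + μe^{−θ/k}cos θ > 0`, and (ii) `k e^{θ/k} + μk cos θ + μ sin θ > 0`. -/
theorem positivity_technical
    (μ k θ : ℝ) (hμ : -1 ≤ μ) (hk : 0 < k)
    (hkπ : k < Real.pi / (2 * Real.log (μ + 4)))
    (hθ : θ ∈ Set.Ioc 0 Real.pi) :
    0 < 1 + μ * Real.exp (-θ / k) * Real.cos θ ∧
    0 < k * Real.exp (θ / k) + μ * k * Real.cos θ + μ * Real.sin θ := by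
  obtain ⟨hθ0, hθπ⟩ := hθ
  have hμ4 : (1:ℝ) < μ + 4 := by linarith
  have hlog : 0 < Real.log (μ + 4) := Real.log_pos hμ4
  have hkp : k * (2 * Real.log (μ + 4)) < Real.pi := by
    rwa [lt_div_iff₀ (by positivity)] at hkπ
  have hsin : 0 ≤ Real.sin θ := Real.sin_nonneg_of_nonneg_of_le_pi hθ0.le hθπ
  have hE : Real.exp (-θ / k) * Real.exp (θ / k) = 1 := by
    rw [← Real.exp_add]
    ring_nf
    exact Real.exp_zero
  have hEpos : 0 < Real.exp (θ / k) := Real.exp_pos _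
  have hE'pos : 0 < Real.exp (-θ / k) := Real.exp_pos _
  have hcos1 : Real.cos θ ≤ 1 := Real.cos_le_one θ
  have hcosm1 : -1 ≤ Real.cos θ := Real.neg_one_le_cos θ
  have part1 : 0 < 1 + μ * Real.exp (-θ / k) * Real.cos θ := by
    rcases le_or_gt 0 (μ * Real.cos θ) with h | h
    · nlinarith
    · rcases le_or_gt 0 μ with hμ0 | hμ0
      · have hcos : Real.cos θ < 0 := by
          by_contra hc
          push_neg at hc
          nlinarith
        have hθhalf : Real.pi / 2 < θ := by
          by_contra hc
          push_neg at hc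
          have := Real.cos_nonneg_of_mem_Icc
            (show θ ∈ Set.Icc (-(Real.pi/2)) (Real.pi/2) from
              ⟨by nlinarith [Real.pi_pos], hc⟩)
          linarith
        have hlt : μ < Real.exp (θ / k) := by
          have h1 : Real.log (μ + 4) < θ / k := by
            rw [lt_div_iff₀ hk]
            nlinarith
          have h2 := Real.exp_lt_exp.mpr h1
          rw [Real.exp_log (by linarith : (0:ℝ) < μ + 4)] at h2
          linarith
        nlinarith [mul_nonneg (mul_nonneg hμ0 hE'pos.le)
            (by linarith : (0:ℝ) ≤ Real.cos θ + 1),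
          mul_pos hE'pos (by linarith : (0:ℝ) < Real.exp (θ / k) - μ)]
      · have hcos : 0 < Real.cos θ := by
          by_contra hc
          push_neg at hc
          nlinarith
        have hlt1 : Real.exp (-θ / k) < 1 := by
          rw [neg_div, Real.exp_lt_one_iff, neg_lt_zero]
          positivity
        nlinarith [mul_nonneg (mul_nonneg (by linarith : (0:ℝ) ≤ μ + 1) hE'pos.le) hcos.le,
          mul_nonneg hE'pos.le (by linarith : (0:ℝ) ≤ 1 - Real.cos θ)]
  refine ⟨part1, ?_⟩
  rcases le_or_gt 0 μ with hμ0 | hμ0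
  · have h2 : 0 < k * Real.exp (θ / k) + μ * k * Real.cos θ := by
      nlinarith [mul_pos (mul_pos hk hEpos) part1]
    nlinarith [mul_nonneg hμ0 hsin]
  · -- μ < 0 case
    obtain ⟨x, hx0, hxθ⟩ : ∃ x : ℝ, 0 < x ∧ θ = 2 * k * x :=
      ⟨θ / (2 * k), by positivity, by field_simp⟩
    have hexp2 : Real.exp (θ / k) = Real.exp x * Real.exp x := by
      rw [← Real.exp_add]
      congr 1
      rw [hxθ]
      field_simp
      ring
    have h1x : 1 + x ≤ Real.exp x := by linarith [Real.add_one_le_exp x]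
    have hs : Real.sin θ ≤ θ := Real.sin_le hθ0.le
    have hkey : k * Real.cos θ + Real.sin θ < k * Real.exp (θ / k) := by
      have hs2 : Real.sin θ ≤ 2 * k * x := by rw [← hxθ]; exact hs
      have hsq : k * ((1 + x) * (1 + x)) ≤ k * (Real.exp x * Real.exp x) :=
        mul_le_mul_of_nonneg_left
          (mul_le_mul h1x h1x (by linarith) (Real.exp_pos x).le) hk.le
      have hc : k * Real.cos θ ≤ k := mul_le_of_le_one_right hk.le hcos1
      have hsq' : k + 2 * (k * x) + k * (x * x) ≤ k * (Real.exp x * Real.exp x) := by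
        have h := hsq
        ring_nf at h ⊢
        linarith
      have hxx : 0 < k * (x * x) := mul_pos hk (mul_pos hx0 hx0)
      rw [hexp2]
      linarith
    rcases le_or_gt 0 (k * Real.cos θ + Real.sin θ) with hf | hf
    · nlinarith [mul_nonneg (by linarith : (0:ℝ) ≤ μ + 1) hf]
    · nlinarith [mul_pos_of_neg_of_neg hμ0 hf, mul_pos hk hEpos]
end
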